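/- Let ε > 0, a, f : [0,1] × ℝ × ℝⁿ × ℝⁿ → ℝⁿ continuous, with a(x,y,u,·) bijective for ‖u‖ ≤ 1 and inverse b(x,y,u,·). Suppose u ∈ C¹([0,1]; ℝⁿ) with ‖u‖_∞ < 1 satisfies u(0) = 0 and the variational equation ∫₀¹ (a(x, x/ε, u(x), u'(x))·φ'(x) + f(x, x/ε, u(x), u'(x))·φ(x)) dx = 0 for all φ ∈ C¹([0,1]; ℝⁿ) with φ(0) = 0. Define v(x) := a(x, x/ε, u(x), u'(x)). Then v ∈ C¹, u(x) = ∫₀ˣ b(y, y/ε, u(y), v(y)) dy and v(x) = −∫ₓ¹ f(y, y/ε, u(y), b(y, y/ε, u(y), v(y))) dy for all x ∈ [0,1]. -/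

import Mathlib

open RealInnerProductSpace Set

lemma ftc01 {E : Type*} [NormedAddCommGroup E] [NormedSpace ℝ E] [CompleteSpace E] {F F' : ℝ → E}
    (hd : ∀ x ∈ Icc (0:ℝ) 1, HasDerivWithinAt F (F' x) (Icc 0 1) x)
    (hc : ContinuousOn F' (Icc 0 1)) {s t : ℝ} (h0 : 0 ≤ s) (hst : s ≤ t) (h1 : t ≤ 1) :
    ∫ y in s..t, F' y = F t - F s := by
  have hsub : Icc s t ⊆ Icc (0:ℝ) 1 := Icc_subset_Icc h0 h1
  apply intervalIntegral.integral_eq_sub_of_hasDeriv_right_of_le hst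
  · exact fun y hy => ((hd y (hsub hy)).continuousWithinAt).mono hsub
  · intro y hy
    have hy0 : 0 < y := lt_of_le_of_lt h0 hy.1
    refine (hd y (hsub (Ioo_subset_Icc_self hy))).mono_of_mem_nhdsWithin ?_
    refine Filter.mem_of_superset (Ioc_mem_nhdsGT_of_mem ⟨le_refl y, lt_of_lt_of_le hy.2 h1⟩) ?_
    exact fun z hz => ⟨(hy0.trans hz.1).le, hz.2⟩
  · exact (hc.mono hsub).intervalIntegrable_of_Icc hst

lemma zero01 {q : ℝ → ℝ} (hq : Continuous q) (hnn : ∀ x, 0 ≤ q x)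
    (hint : ∫ x in (0:ℝ)..1, q x = 0) : ∀ x ∈ Icc (0:ℝ) 1, q x = 0 := by
  intro x₀ hx₀
  by_contra hne
  have hpos : 0 < q x₀ := (hnn x₀).lt_of_ne (Ne.symm hne)
  obtain ⟨δ, hδ, hball⟩ := Metric.continuousAt_iff.mp hq.continuousAt (q x₀ / 2) (by linarith)
  set s := max 0 (x₀ - δ/2) with hs
  set t := min 1 (x₀ + δ/2) with ht
  have h0s : 0 ≤ s := le_max_left _ _
  have ht1 : t ≤ 1 := min_le_left _ _
  have hst : s < t := by
    rw [hs, ht]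
    apply max_lt_iff.mpr
    constructor
    · exact lt_min_iff.mpr ⟨zero_lt_one, by nlinarith [hx₀.1]⟩
    · exact lt_min_iff.mpr ⟨by nlinarith [hx₀.2], by linarith⟩
  have key : ∀ y ∈ Icc s t, q x₀ / 2 ≤ q y := by
    intro y hy
    have h1 : x₀ - δ/2 ≤ y := le_trans (le_max_right _ _) hy.1
    have h2 : y ≤ x₀ + δ/2 := le_trans hy.2 (min_le_right _ _)
    have : dist y x₀ < δ := by rw [Real.dist_eq]; rw [abs_lt]; constructor <;> linarith
    have := hball this
    rw [Real.dist_eq, abs_lt] at this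
    linarith [this.1, this.2]
  have i1 : (∫ x in (0:ℝ)..s, q x) + ∫ x in s..1, q x = ∫ x in (0:ℝ)..1, q x :=
    intervalIntegral.integral_add_adjacent_intervals (hq.intervalIntegrable (μ := MeasureTheory.volume) _ _)
      (hq.intervalIntegrable (μ := MeasureTheory.volume) _ _)
  have i2 : (∫ x in s..t, q x) + ∫ x in t..(1:ℝ), q x = ∫ x in s..(1:ℝ), q x :=
    intervalIntegral.integral_add_adjacent_intervals (hq.intervalIntegrable (μ := MeasureTheory.volume) _ _)
      (hq.intervalIntegrable (μ := MeasureTheory.volume) _ _)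
  have n1 : 0 ≤ ∫ x in (0:ℝ)..s, q x :=
    intervalIntegral.integral_nonneg h0s (fun x _ => hnn x)
  have n3 : 0 ≤ ∫ x in t..(1:ℝ), q x :=
    intervalIntegral.integral_nonneg ht1 (fun x _ => hnn x)
  have n2 : (t - s) * (q x₀ / 2) ≤ ∫ x in s..t, q x := by
    have := intervalIntegral.integral_mono_on hst.le (intervalIntegrable_const)
      (hq.intervalIntegrable (μ := MeasureTheory.volume) _ _) key
    rwa [intervalIntegral.integral_const, smul_eq_mul] at this
  nlinarith [mul_pos (sub_pos.mpr hst) (by linarith : (0:ℝ) < q x₀ / 2)]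

theorem stmt12 {n : ℕ} (ε : ℝ) (hε : 0 < ε)
    (a f b : ℝ → ℝ → EuclideanSpace ℝ (Fin n) → EuclideanSpace ℝ (Fin n) →
      EuclideanSpace ℝ (Fin n))
    (hacont : ContinuousOn
      (fun p : ℝ × ℝ × EuclideanSpace ℝ (Fin n) × EuclideanSpace ℝ (Fin n) =>
        a p.1 p.2.1 p.2.2.1 p.2.2.2)
      (Icc 0 1 ×ˢ (univ : Set (ℝ × EuclideanSpace ℝ (Fin n) × EuclideanSpace ℝ (Fin n)))))
    (hfcont : ContinuousOn
      (fun p : ℝ × ℝ × EuclideanSpace ℝ (Fin n) × EuclideanSpace ℝ (Fin n) =>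
        f p.1 p.2.1 p.2.2.1 p.2.2.2)
      (Icc 0 1 ×ˢ (univ : Set (ℝ × EuclideanSpace ℝ (Fin n) × EuclideanSpace ℝ (Fin n)))))
    (hinv : ∀ x ∈ Icc (0:ℝ) 1, ∀ (y : ℝ) (uu : EuclideanSpace ℝ (Fin n)), ‖uu‖ ≤ 1 →
      ∀ w : EuclideanSpace ℝ (Fin n), a x y uu (b x y uu w) = w ∧ b x y uu (a x y uu w) = w)
    (u u' : ℝ → EuclideanSpace ℝ (Fin n))
    (hu' : ∀ x ∈ Icc (0:ℝ) 1, HasDerivWithinAt u (u' x) (Icc 0 1) x)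
    (hu'cont : ContinuousOn u' (Icc 0 1))
    (husmall : ∀ x ∈ Icc (0:ℝ) 1, ‖u x‖ < 1)
    (hu0 : u 0 = 0)
    (hvar : ∀ φ φ' : ℝ → EuclideanSpace ℝ (Fin n),
      (∀ x ∈ Icc (0:ℝ) 1, HasDerivWithinAt φ (φ' x) (Icc 0 1) x) →
      ContinuousOn φ' (Icc 0 1) → φ 0 = 0 →
      (∫ x in (0:ℝ)..1, (⟪a x (x / ε) (u x) (u' x), φ' x⟫
        + ⟪f x (x / ε) (u x) (u' x), φ x⟫)) = 0)
    (v : ℝ → EuclideanSpace ℝ (Fin n))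
    (hv : ∀ x : ℝ, v x = a x (x / ε) (u x) (u' x)) :
    (∃ v' : ℝ → EuclideanSpace ℝ (Fin n), ContinuousOn v' (Icc 0 1) ∧
      ∀ x ∈ Icc (0:ℝ) 1, HasDerivWithinAt v (v' x) (Icc 0 1) x) ∧
    (∀ x ∈ Icc (0:ℝ) 1, u x = ∫ y in (0:ℝ)..x, b y (y / ε) (u y) (v y)) ∧
    (∀ x ∈ Icc (0:ℝ) 1,
      v x = -∫ y in x..(1:ℝ), f y (y / ε) (u y) (b y (y / ε) (u y) (v y))) := by
  have ucont : ContinuousOn u (Icc (0:ℝ) 1) := fun x hx => (hu' x hx).continuousWithinAt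
  -- the curve
  have wcont : ContinuousOn
      (fun x : ℝ => ((x, x / ε, u x, u' x) :
        ℝ × ℝ × EuclideanSpace ℝ (Fin n) × EuclideanSpace ℝ (Fin n))) (Icc 0 1) :=
    continuousOn_id.prodMk ((continuousOn_id.div_const ε).prodMk (ucont.prodMk hu'cont))
  have wmaps : ∀ x ∈ Icc (0:ℝ) 1,
      ((x, x / ε, u x, u' x) :
        ℝ × ℝ × EuclideanSpace ℝ (Fin n) × EuclideanSpace ℝ (Fin n)) ∈
      (Icc 0 1 ×ˢ (univ : Set (ℝ × EuclideanSpace ℝ (Fin n) × EuclideanSpace ℝ (Fin n)))) :=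
    fun x hx => ⟨hx, mem_univ _⟩
  set g : ℝ → EuclideanSpace ℝ (Fin n) := fun x => f x (x / ε) (u x) (u' x) with hgdef
  have hgcont : ContinuousOn g (Icc 0 1) := by
    have := hfcont.comp wcont wmaps
    simpa [Function.comp_def] using this
  have vcont : ContinuousOn v (Icc 0 1) := by
    have := hacont.comp wcont wmaps
    refine ContinuousOn.congr (by simpa [Function.comp_def] using this) ?_
    exact fun x _ => hv x
  -- clamped versions
  set c : ℝ → ℝ := fun x => min 1 (max 0 x) with hcdef
  have hc : Continuous c := continuous_const.min (continuous_const.max continuous_id)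
  have hcmem : ∀ x, c x ∈ Icc (0:ℝ) 1 :=
    fun x => ⟨le_min zero_le_one (le_max_left 0 x), min_le_left _ _⟩
  have hcid : ∀ x ∈ Icc (0:ℝ) 1, c x = x := fun x hx => by
    rw [hcdef]; simp only [max_eq_right hx.1, min_eq_right hx.2]
  set gt : ℝ → EuclideanSpace ℝ (Fin n) := fun x => g (c x) with hgtdef
  have hgt : Continuous gt := hgcont.comp_continuous hc hcmem
  have hgteq : ∀ x ∈ Icc (0:ℝ) 1, gt x = g x := fun x hx => by rw [hgtdef]; simp [hcid x hx]
  set G : ℝ → EuclideanSpace ℝ (Fin n) := fun x => ∫ y in (0:ℝ)..x, gt y with hGdef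
  have hGd : ∀ x : ℝ, HasDerivAt G (gt x) x :=
    fun x => (hgt.integral_hasStrictDerivAt 0 x).hasDerivAt
  have hGcont : Continuous G := by
    rw [continuous_iff_continuousAt]; exact fun x => (hGd x).continuousAt
  set h : ℝ → EuclideanSpace ℝ (Fin n) := fun x => v x - G x + G 1 with hhdef
  have hhcont : ContinuousOn h (Icc 0 1) :=
    (vcont.sub hGcont.continuousOn).add continuousOn_const
  -- key variational identity
  have key : ∀ φ φ' : ℝ → EuclideanSpace ℝ (Fin n),
      (∀ x ∈ Icc (0:ℝ) 1, HasDerivWithinAt φ (φ' x) (Icc 0 1) x) →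
      ContinuousOn φ' (Icc 0 1) → φ 0 = 0 →
      (∫ x in (0:ℝ)..1, ⟪h x, φ' x⟫) = 0 := by
    intro φ φ' hφ hφ' hφ0
    have φcont : ContinuousOn φ (Icc (0:ℝ) 1) := fun x hx => (hφ x hx).continuousWithinAt
    have h1 : (∫ x in (0:ℝ)..1, (⟪v x, φ' x⟫ + ⟪g x, φ x⟫)) = 0 := by
      have := hvar φ φ' hφ hφ' hφ0
      simp_rw [← hv] at this
      exact this
    -- integration by parts
    have hPd : ∀ x ∈ Icc (0:ℝ) 1,
        HasDerivWithinAt (fun y => ⟪G y - G 1, φ y⟫)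
          (⟪G x - G 1, φ' x⟫ + ⟪gt x, φ x⟫) (Icc 0 1) x := fun x hx =>
      HasDerivWithinAt.inner ℝ (((hGd x).sub_const (G 1)).hasDerivWithinAt) (hφ x hx)
    have hP'cont : ContinuousOn (fun x => ⟪G x - G 1, φ' x⟫ + ⟪gt x, φ x⟫) (Icc (0:ℝ) 1) :=
      ((hGcont.continuousOn.sub continuousOn_const).inner hφ').add
        (hgt.continuousOn.inner φcont)
    have hIBP : (∫ x in (0:ℝ)..1, (⟪G x - G 1, φ' x⟫ + ⟪gt x, φ x⟫)) = 0 := by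
      rw [ftc01 hPd hP'cont le_rfl zero_le_one le_rfl]
      simp [hφ0]
    -- combine
    have hi1 : IntervalIntegrable (fun x => ⟪v x, φ' x⟫ + ⟪g x, φ x⟫)
        MeasureTheory.volume 0 1 := by
      apply ContinuousOn.intervalIntegrable_of_Icc zero_le_one
      exact (vcont.inner hφ').add (hgcont.inner φcont)
    have hi2 : IntervalIntegrable (fun x => ⟪G x - G 1, φ' x⟫ + ⟪gt x, φ x⟫)
        MeasureTheory.volume 0 1 := hP'cont.intervalIntegrable_of_Icc zero_le_one
    have hsplit : (∫ x in (0:ℝ)..1, ⟪h x, φ' x⟫) =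
        (∫ x in (0:ℝ)..1, ((⟪v x, φ' x⟫ + ⟪g x, φ x⟫)
          - (⟪G x - G 1, φ' x⟫ + ⟪gt x, φ x⟫))) := by
      apply intervalIntegral.integral_congr
      intro x hx
      rw [uIcc_of_le zero_le_one] at hx
      show ⟪h x, φ' x⟫ = (⟪v x, φ' x⟫ + ⟪g x, φ x⟫) - (⟪G x - G 1, φ' x⟫ + ⟪gt x, φ x⟫)
      rw [hgteq x hx, hhdef]
      simp only [sub_add, inner_sub_left, inner_add_left]
      ring
    rw [hsplit, intervalIntegral.integral_sub hi1 hi2, h1, hIBP, sub_zero]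
  -- apply with test function built from h
  set ht : ℝ → EuclideanSpace ℝ (Fin n) := fun x => h (c x) with htdef
  have hhtc : Continuous ht := hhcont.comp_continuous hc hcmem
  have hhteq : ∀ x ∈ Icc (0:ℝ) 1, ht x = h x := fun x hx => by rw [htdef]; simp [hcid x hx]
  have hzero : ∀ x ∈ Icc (0:ℝ) 1, h x = 0 := by
    have hkey := key (fun x => ∫ y in (0:ℝ)..x, ht y) ht
      (fun x _ => ((hhtc.integral_hasStrictDerivAt 0 x).hasDerivAt).hasDerivWithinAt)
      hhtc.continuousOn (intervalIntegral.integral_same)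
    have hq0 : (∫ x in (0:ℝ)..1, ⟪ht x, ht x⟫) = 0 := by
      have heq : (∫ x in (0:ℝ)..1, ⟪ht x, ht x⟫) = ∫ x in (0:ℝ)..1, ⟪h x, ht x⟫ := by
        apply intervalIntegral.integral_congr
        intro x hx
        rw [uIcc_of_le zero_le_one] at hx
        show ⟪ht x, ht x⟫ = ⟪h x, ht x⟫
        rw [hhteq x hx]
      rw [heq, hkey]
    have := zero01 (hhtc.inner hhtc) (fun x => real_inner_self_nonneg) hq0
    intro x hx
    have h0 := this x hx
    rw [inner_self_eq_zero] at h0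
    rw [← hhteq x hx]
    exact h0
  have hveq : ∀ x ∈ Icc (0:ℝ) 1, v x = G x - G 1 := by
    intro x hx
    have := hzero x hx
    rw [hhdef] at this
    simp only [sub_add, sub_eq_zero] at this
    rw [this]
  -- the b-term equals u'
  have hbu : ∀ y ∈ Icc (0:ℝ) 1, b y (y / ε) (u y) (v y) = u' y := by
    intro y hy
    rw [hv y]
    exact (hinv y hy (y / ε) (u y) (husmall y hy).le (u' y)).2
  refine ⟨⟨gt, hgt.continuousOn, ?_⟩, ?_, ?_⟩
  · intro x hx
    exact (((hGd x).sub_const (G 1)).hasDerivWithinAt).congr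
      (fun y hy => hveq y hy) (hveq x hx)
  · intro x hx
    have : (∫ y in (0:ℝ)..x, b y (y / ε) (u y) (v y)) = ∫ y in (0:ℝ)..x, u' y := by
      apply intervalIntegral.integral_congr
      intro y hy
      rw [uIcc_of_le hx.1] at hy
      exact hbu y (Icc_subset_Icc le_rfl hx.2 hy)
    rw [this, ftc01 hu' hu'cont le_rfl hx.1 hx.2, hu0, sub_zero]
  · intro x hx
    have hcongr : (∫ y in x..(1:ℝ), f y (y / ε) (u y) (b y (y / ε) (u y) (v y)))
        = ∫ y in x..(1:ℝ), gt y := by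
      apply intervalIntegral.integral_congr
      intro y hy
      rw [uIcc_of_le hx.2] at hy
      have hy' : y ∈ Icc (0:ℝ) 1 := Icc_subset_Icc hx.1 le_rfl hy
      show f y (y / ε) (u y) (b y (y / ε) (u y) (v y)) = gt y
      rw [hbu y hy']
      exact (hgteq y hy').symm
    have hadd : (∫ y in (0:ℝ)..x, gt y) + (∫ y in x..(1:ℝ), gt y) = ∫ y in (0:ℝ)..1, gt y :=
      intervalIntegral.integral_add_adjacent_intervals
        (hgt.intervalIntegrable (μ := MeasureTheory.volume) _ _)
        (hgt.intervalIntegrable (μ := MeasureTheory.volume) _ _)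
    rw [hcongr, hveq x hx]
    have : (∫ y in x..(1:ℝ), gt y) = G 1 - G x := by
      rw [hGdef]
      exact eq_sub_of_add_eq' hadd
    rw [this, neg_sub]
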